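/- Let X be a set and G a group of permutations of X. Let P and Q be finite subsets of X such that no point of P has a finite G-orbit. Then there exists g ∈ G such that g·P ∩ Q = ∅. -/
import Mathlib
open Pointwise

/-- P. M. Neumann's Lemma: if `G` acts on `X` and `P, Q` are finite subsets of `X`
such that no point of `P` has a finite orbit, then some `g ∈ G` moves `P` off `Q`. -/
theorem pm_neumann {X G : Type*} [Group G] [MulAction G X] (P Q : Finset X)
    (hP : ∀ p ∈ P, ¬ (MulAction.orbit G p).Finite) :
    ∃ g : G, Disjoint ((fun x => g • x) '' (P : Set X)) (Q : Set X) := by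
  classical
  by_contra hcon
  push_neg at hcon
  -- for each g, there are p ∈ P, q ∈ Q with g • p = q
  have key : ∀ g : G, ∃ p ∈ P, ∃ q ∈ Q, g • p = q := by
    intro g
    have := hcon g
    rw [Set.not_disjoint_iff] at this
    obtain ⟨x, hx1, hx2⟩ := this
    obtain ⟨p, hp, rfl⟩ := hx1
    exact ⟨p, hp, g • p, hx2, rfl⟩
  -- index set: pairs (p,q) such that some g sends p to q
  set s : Finset (X × X) :=
    (P ×ˢ Q).filter (fun pq => ∃ g : G, g • pq.1 = pq.2) with hs
  have hchoice : ∀ pq ∈ s, ∃ g : G, g • pq.1 = pq.2 := fun pq hpq =>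
    (Finset.mem_filter.mp hpq).2
  choose! g0 hg0 using hchoice
  have hcovers : ⋃ pq ∈ s, g0 pq • ((MulAction.stabilizer G pq.1 : Subgroup G) : Set G)
      = Set.univ := by
    ext g
    simp only [Set.mem_iUnion, Set.mem_univ, iff_true]
    obtain ⟨p, hp, q, hq, hgp⟩ := key g
    have hpq : (p, q) ∈ s := by
      simp only [hs, Finset.mem_filter, Finset.mem_product]
      exact ⟨⟨hp, hq⟩, g, hgp⟩
    refine ⟨(p, q), hpq, ?_⟩
    rw [mem_leftCoset_iff]
    simp only [SetLike.mem_coe, MulAction.mem_stabilizer_iff]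
    have h0 := hg0 _ hpq
    simp only at h0
    rw [mul_smul, hgp, inv_smul_eq_iff]
    exact h0.symm
  obtain ⟨pq, hpq, hfi⟩ := Subgroup.exists_finiteIndex_of_leftCoset_cover hcovers
  have hpP : pq.1 ∈ P := (Finset.mem_product.mp (Finset.mem_filter.mp hpq).1).1
  refine hP pq.1 hpP ?_
  have : Finite (G ⧸ MulAction.stabilizer G pq.1) := (MulAction.stabilizer G pq.1).finite_quotient_of_finiteIndex
  have := Finite.of_equiv _ (MulAction.orbitEquivQuotientStabilizer G pq.1).symm
  exact Set.toFinite _
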